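/- Let d ≥ 1, C_log > 0, ψ : (0,∞) → ℝ be a twice-differentiable convex function such that ψ''(x)/4 ≤ ψ''(z) ≤ 4ψ''(x) for every x > 0 and every z ∈ [x/2, 2x]. Let γ, γ' ∈ ℝ^d with 0 < γ_i ≤ γ'_i for all i, and L, L' ∈ ℝ^d with positive entries. Define φ(p) = ∑_i γ_i ψ(p_i), φ'(p) = ∑_i γ'_i ψ(p_i), φ_L(p) = −C_log ∑_i log p_i, F(p) = ⟨p, L⟩ + φ(p) + φ_L(p), and F'(p) = ⟨p, L'⟩ + φ'(p) + φ_L(p). Let Ω ⊆ (0,∞)^d be a convex set, and let x minimize F over Ω and y minimize F' over Ω. If C_log ≥ max{9, 32·∑_i (L'_i − L_i)^2 x_i^2, 32·∑_i (γ'_i − γ_i)^2 ψ'(x_i)^2 x_i^2}, then (1/2)·x_i ≤ y_i ≤ 2·x_i for every i ∈ [d]. -/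

import Mathlib

open Finset

/-- Elementary upper bound: `log (1+v) ≤ v - v²/4` for `|v| ≤ 1/2`. -/
private lemma logA {v : ℝ} (h1 : -(1/2:ℝ) ≤ v) (h2 : v ≤ 1/2) :
    Real.log (1 + v) ≤ v - v^2/4 := by
  have hv : (0:ℝ) < 1 + v := by linarith
  rw [Real.log_le_iff_le_exp hv]
  rcases le_or_gt 0 v with hv0 | hv0
  · have e0 : (0:ℝ) ≤ 1 + (v - v^2/4)/3 := by nlinarith
    have e1 : (1:ℝ) + (v - v^2/4)/3 ≤ Real.exp ((v - v^2/4)/3) := by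
      have := Real.add_one_le_exp ((v - v^2/4)/3); linarith
    have e3 : (1 + (v - v^2/4)/3)^3 ≤ Real.exp (v - v^2/4) := by
      calc (1 + (v - v^2/4)/3)^3 ≤ (Real.exp ((v - v^2/4)/3))^3 :=
            pow_le_pow_left₀ e0 e1 3
        _ = Real.exp (((3:ℕ):ℝ) * ((v - v^2/4)/3)) := by rw [Real.exp_nat_mul]
        _ = Real.exp (v - v^2/4) := by
            rw [show (((3:ℕ):ℝ) * ((v - v^2/4)/3)) = v - v^2/4 by push_cast; ring]
    have e4 : 1 + v ≤ (1 + (v - v^2/4)/3)^3 := by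
      nlinarith [sq_nonneg v, mul_nonneg (mul_nonneg hv0 hv0) hv0, sq_nonneg (v*v)]
    linarith
  · have e1 : (0:ℝ) < 1 + (v - v^2/4)/2 := by nlinarith
    have e2 : 1 + (v - v^2/4)/2 ≤ Real.exp ((v - v^2/4)/2) := by
      have := Real.add_one_le_exp ((v - v^2/4)/2); linarith
    have e3 : (1 + (v - v^2/4)/2)^2 ≤ Real.exp (v - v^2/4) := by
      calc (1 + (v - v^2/4)/2)^2 ≤ (Real.exp ((v - v^2/4)/2))^2 :=
            pow_le_pow_left₀ e1.le e2 2
        _ = Real.exp (((2:ℕ):ℝ) * ((v - v^2/4)/2)) := by rw [Real.exp_nat_mul]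
        _ = Real.exp (v - v^2/4) := by
            rw [show (((2:ℕ):ℝ) * ((v - v^2/4)/2)) = v - v^2/4 by push_cast; ring]
    have e4 : 1 + v ≤ (1 + (v - v^2/4)/2)^2 := by
      nlinarith [sq_nonneg v, mul_nonneg (sq_nonneg v) (sq_nonneg v)]
    linarith

/-- Elementary lower bound: `w - 2w² ≤ log (1+w)` for `w ≥ -1/2`. -/
private lemma logB {w : ℝ} (h1 : -(1/2:ℝ) ≤ w) : w - 2*w^2 ≤ Real.log (1 + w) := by
  have hw : (0:ℝ) < 1 + w := by linarith
  have key : Real.exp (w - 2*w^2) ≤ 1 + w := by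
    have hd : (0:ℝ) < 1 - w + 2*w^2 := by nlinarith
    have e1 : 1 - (w - 2*w^2) ≤ Real.exp (-(w - 2*w^2)) := by
      have := Real.add_one_le_exp (-(w - 2*w^2)); linarith
    have e2 : Real.exp (w - 2*w^2) * (1 - w + 2*w^2) ≤ 1 := by
      have h3 := mul_le_mul_of_nonneg_left e1 (Real.exp_pos (w - 2*w^2)).le
      rw [← Real.exp_add] at h3
      simp only [add_neg_cancel, Real.exp_zero] at h3
      calc Real.exp (w - 2*w^2) * (1 - w + 2*w^2)
          = Real.exp (w - 2*w^2) * (1 - (w - 2*w^2)) := by ring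
        _ ≤ 1 := h3
    nlinarith [Real.exp_pos (w - 2*w^2), sq_nonneg w,
      mul_nonneg (sq_nonneg w) (by linarith : (0:ℝ) ≤ 1 + 2*w)]
  calc w - 2*w^2 = Real.log (Real.exp (w - 2*w^2)) := (Real.log_exp _).symm
    _ ≤ Real.log (1 + w) := Real.log_le_log (Real.exp_pos _) key

/-- If the value at the right end is minimal and the function is bounded by the chord,
the value at the interpolation point is at most the value at the left end. -/
private lemma chord_lemma {t FX FY FZ : ℝ} (ht0 : 0 < t) (ht1 : t < 1)
    (hconv : FZ ≤ (1-t)*FX + t*FY) (hmin : FY ≤ FZ) : FZ ≤ FX := by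
  nlinarith [mul_le_mul_of_nonneg_left hmin ht0.le]

/-- Extracting the strong-convexity gap from minimality at the left end. -/
private lemma gap_lemma {s FX FW FZ D : ℝ} (hs : 0 < s) (hmin : FX ≤ FW)
    (hconv : FW ≤ (1-s)*FX + s*FZ - s*D) : D ≤ FZ - FX := by
  have h : s * D ≤ s * (FZ - FX) := by nlinarith
  exact le_of_mul_le_mul_left h hs

set_option maxHeartbeats 4000000 in
/-- Lemma C.1 (`general_multi_relation`): multiplicative stability via extra log-barrier. -/
theorem log_barrier_multiplicative_stability
    (d : ℕ) (hd : 1 ≤ d) (Clog : ℝ) (hClogPos : 0 < Clog)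
    (ψ ψ' ψ'' : ℝ → ℝ)
    (hψ : ∀ u > (0 : ℝ), HasDerivAt ψ (ψ' u) u)
    (hψ' : ∀ u > (0 : ℝ), HasDerivAt ψ' (ψ'' u) u)
    (hψconv : ConvexOn ℝ (Set.Ioi (0 : ℝ)) ψ)
    (hψ''comp : ∀ u > (0 : ℝ), ∀ z ∈ Set.Icc (u / 2) (2 * u),
      ψ'' u / 4 ≤ ψ'' z ∧ ψ'' z ≤ 4 * ψ'' u)
    (γ γ' L L' : Fin d → ℝ)
    (hγpos : ∀ i, 0 < γ i) (hγle : ∀ i, γ i ≤ γ' i)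
    (hL : ∀ i, 0 < L i) (hL' : ∀ i, 0 < L' i)
    (Ω : Set (Fin d → ℝ)) (hΩconv : Convex ℝ Ω)
    (hΩpos : ∀ p ∈ Ω, ∀ i, 0 < p i)
    (x y : Fin d → ℝ) (hx : x ∈ Ω) (hy : y ∈ Ω)
    (hxmin : ∀ p ∈ Ω,
      (∑ i, x i * L i) + (∑ i, γ i * ψ (x i)) - Clog * ∑ i, Real.log (x i)
        ≤ (∑ i, p i * L i) + (∑ i, γ i * ψ (p i)) - Clog * ∑ i, Real.log (p i))
    (hymin : ∀ p ∈ Ω,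
      (∑ i, y i * L' i) + (∑ i, γ' i * ψ (y i)) - Clog * ∑ i, Real.log (y i)
        ≤ (∑ i, p i * L' i) + (∑ i, γ' i * ψ (p i)) - Clog * ∑ i, Real.log (p i))
    (hClogBig : max 9 (max (32 * ∑ i, (L' i - L i) ^ 2 * (x i) ^ 2)
        (32 * ∑ i, (γ' i - γ i) ^ 2 * (ψ' (x i)) ^ 2 * (x i) ^ 2)) ≤ Clog) :
    ∀ i, x i / 2 ≤ y i ∧ y i ≤ 2 * x i := by
  by_contra hcon
  push_neg at hcon
  obtain ⟨j, hj⟩ := hcon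
  have hxpos : ∀ i, 0 < x i := hΩpos x hx
  have hypos : ∀ i, 0 < y i := hΩpos y hy
  have hγ'pos : ∀ i, 0 < γ' i := fun i => lt_of_lt_of_le (hγpos i) (hγle i)
  -- the relative displacement
  obtain ⟨u, hudef⟩ : ∃ f : Fin d → ℝ, f = fun i => (y i - x i) / x i := ⟨_, rfl⟩
  have hux : ∀ i, u i * x i = y i - x i := by
    intro i
    rw [hudef]
    exact div_mul_cancel₀ _ (hxpos i).ne'
  have huj : 1/2 < |u j| := by
    rcases le_or_gt (x j / 2) (y j) with h | h
    · have h2 := hj h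
      have : 1 < u j := by
        simp only [hudef]
        rw [lt_div_iff₀ (hxpos j)]
        linarith
      calc (1:ℝ)/2 < u j := by linarith
        _ ≤ |u j| := le_abs_self _
    · have : u j < -(1/2) := by
        simp only [hudef]
        rw [div_lt_iff₀ (hxpos j)]
        linarith
      calc (1:ℝ)/2 < -(u j) := by linarith
        _ ≤ |u j| := neg_le_abs _
  have hne : (Finset.univ : Finset (Fin d)).Nonempty := ⟨j, mem_univ j⟩
  obtain ⟨M, hMdef⟩ : ∃ m : ℝ, m = Finset.univ.sup' hne (fun i => |u i|) := ⟨_, rfl⟩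
  have hMj : |u j| ≤ M := by
    rw [hMdef]; exact Finset.le_sup' (fun i => |u i|) (mem_univ j)
  have hMall : ∀ i, |u i| ≤ M := by
    intro i; rw [hMdef]; exact Finset.le_sup' (fun i => |u i|) (mem_univ i)
  have hM : 1/2 < M := lt_of_lt_of_le huj hMj
  have hMpos : 0 < M := by linarith
  obtain ⟨k, -, hk⟩ := Finset.exists_mem_eq_sup' hne (fun i => |u i|)
  have hk' : M = |u k| := by rw [hMdef]; exact hk
  obtain ⟨t, htdef⟩ : ∃ r : ℝ, r = 1 / (2 * M) := ⟨_, rfl⟩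
  have ht0 : 0 < t := by rw [htdef]; positivity
  have ht1 : t < 1 := by
    rw [htdef, div_lt_one (by linarith)]; linarith
  have htM : t * M = 1/2 := by
    rw [htdef]; field_simp
  have htu : ∀ i, |t * u i| ≤ 1/2 := by
    intro i
    rw [abs_mul, abs_of_pos ht0]
    calc t * |u i| ≤ t * M := mul_le_mul_of_nonneg_left (hMall i) ht0.le
      _ = 1/2 := htM
  -- the intermediate point z
  obtain ⟨z, hzdef⟩ : ∃ f : Fin d → ℝ, f = fun i => (1 - t) * x i + t * y i := ⟨_, rfl⟩
  have hzeq : z = (1 - t) • x + t • y := by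
    funext i
    simp only [hzdef, Pi.add_apply, Pi.smul_apply, smul_eq_mul]
  have hzΩ : z ∈ Ω := by
    rw [hzeq]
    exact hΩconv hx hy (by linarith : (0:ℝ) ≤ 1 - t) ht0.le (by ring)
  have hzpos : ∀ i, 0 < z i := hΩpos z hzΩ
  have hzx : ∀ i, z i = x i * (1 + t * u i) := by
    intro i
    simp only [hzdef]
    linear_combination (-t) * hux i
  have hzxd : ∀ i, z i - x i = t * u i * x i := by
    intro i; rw [hzx i]; ring
  -- ψ tangent line inequality
  have tangent : ∀ a b : ℝ, 0 < a → 0 < b → ψ a + ψ' a * (b - a) ≤ ψ b := by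
    intro a b ha hb
    rcases lt_trichotomy a b with h | h | h
    · have hs := hψconv.le_slope_of_hasDerivAt (Set.mem_Ioi.mpr ha) (Set.mem_Ioi.mpr hb) h (hψ a ha)
      rw [slope_def_field, le_div_iff₀ (by linarith : (0:ℝ) < b - a)] at hs
      linarith
    · subst h; simp
    · have hs := hψconv.slope_le_of_hasDerivAt (Set.mem_Ioi.mpr hb) (Set.mem_Ioi.mpr ha) h (hψ a ha)
      rw [slope_def_field, div_le_iff₀ (by linarith : (0:ℝ) < a - b)] at hs
      nlinarith
  -- Step (b): F'(z) ≤ F'(x)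
  have hstepb :
      (∑ i, z i * L' i) + (∑ i, γ' i * ψ (z i)) - Clog * ∑ i, Real.log (z i)
        ≤ (∑ i, x i * L' i) + (∑ i, γ' i * ψ (x i)) - Clog * ∑ i, Real.log (x i) := by
    have h1 : ∑ i, z i * L' i = (1-t) * ∑ i, x i * L' i + t * ∑ i, y i * L' i := by
      rw [Finset.mul_sum, Finset.mul_sum, ← Finset.sum_add_distrib]
      exact Finset.sum_congr rfl fun i _ => by simp only [hzdef]; ring
    have h2 : ∑ i, γ' i * ψ (z i) ≤ (1-t) * (∑ i, γ' i * ψ (x i)) + t * ∑ i, γ' i * ψ (y i) := by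
      rw [Finset.mul_sum, Finset.mul_sum, ← Finset.sum_add_distrib]
      apply Finset.sum_le_sum
      intro i _
      have hcv := hψconv.2 (Set.mem_Ioi.mpr (hxpos i)) (Set.mem_Ioi.mpr (hypos i))
        (by linarith : (0:ℝ) ≤ 1 - t) ht0.le (by ring)
      simp only [smul_eq_mul] at hcv
      have hz' : ψ (z i) ≤ (1-t) * ψ (x i) + t * ψ (y i) := by
        simp only [hzdef]; exact hcv
      nlinarith [hγ'pos i]
    have h3 : (1-t) * ∑ i, Real.log (x i) + t * ∑ i, Real.log (y i) ≤ ∑ i, Real.log (z i) := by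
      rw [Finset.mul_sum, Finset.mul_sum, ← Finset.sum_add_distrib]
      apply Finset.sum_le_sum
      intro i _
      have hcc := (strictConcaveOn_log_Ioi.concaveOn).2 (Set.mem_Ioi.mpr (hxpos i))
        (Set.mem_Ioi.mpr (hypos i)) (by linarith : (0:ℝ) ≤ 1 - t) ht0.le (by ring)
      simp only [smul_eq_mul] at hcc
      simp only [hzdef]
      exact hcc
    have h4 := mul_le_mul_of_nonneg_left h3 hClogPos.le
    refine chord_lemma ht0 ht1 ?_ (hymin z hzΩ)
    linarith [h1, h2, h4]
  -- Step (a): strong convexity lower bound, with s = 1/256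
  obtain ⟨s, hs1⟩ : ∃ r : ℝ, r = (1/256 : ℝ) := ⟨_, rfl⟩
  have hs0 : (0:ℝ) < s := by rw [hs1]; norm_num
  obtain ⟨w, hwdef⟩ : ∃ f : Fin d → ℝ, f = fun i => (1 - s) * x i + s * z i := ⟨_, rfl⟩
  have hweq : w = (1 - s) • x + s • z := by
    funext i
    simp only [hwdef, Pi.add_apply, Pi.smul_apply, smul_eq_mul]
  have hwΩ : w ∈ Ω := by
    rw [hweq]
    exact hΩconv hx hzΩ (by rw [hs1]; norm_num : (0:ℝ) ≤ 1 - s) hs0.le (by ring)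
  have hgap : ∀ i, (1-s) * Real.log (x i) + s * Real.log (z i) + s * ((31/128) * (t * u i)^2)
      ≤ Real.log (w i) := by
    intro i
    have hc := htu i
    have hc1 : -(1/2:ℝ) ≤ t * u i := by
      have := (abs_le.mp hc).1; linarith
    have hc2 : t * u i ≤ 1/2 := (abs_le.mp hc).2
    have hsc1 : -(1/2:ℝ) ≤ s * (t * u i) := by
      rw [hs1]; linarith
    have hwz : w i = x i * (1 + s * (t * u i)) := by
      simp only [hwdef]
      rw [hzx i]; ring
    have hpos1 : (0:ℝ) < 1 + t * u i := by linarith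
    have hpos2 : (0:ℝ) < 1 + s * (t * u i) := by
      have : -(1/2:ℝ) ≤ s * (t * u i) := hsc1
      linarith
    rw [hwz, Real.log_mul (hxpos i).ne' hpos2.ne', hzx i,
      Real.log_mul (hxpos i).ne' hpos1.ne']
    have hA := logA hc1 hc2
    have hB := logB hsc1
    have h1 : s * Real.log (1 + t * u i) ≤ s * ((t * u i) - (t * u i)^2/4) :=
      mul_le_mul_of_nonneg_left hA hs0.le
    have hmid : s * Real.log (1 + t * u i) + s * ((31/128) * (t * u i)^2)
        ≤ Real.log (1 + s * (t * u i)) := by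
      rw [hs1] at h1 hB ⊢
      nlinarith [h1, hB, sq_nonneg (t * u i)]
    linarith [hmid]
  have hstepa :
      Clog * ((31/128) * ∑ i, (t * u i)^2)
        ≤ ((∑ i, z i * L i) + (∑ i, γ i * ψ (z i)) - Clog * ∑ i, Real.log (z i))
          - ((∑ i, x i * L i) + (∑ i, γ i * ψ (x i)) - Clog * ∑ i, Real.log (x i)) := by
    have h1 : ∑ i, w i * L i = (1-s) * ∑ i, x i * L i + s * ∑ i, z i * L i := by
      rw [Finset.mul_sum, Finset.mul_sum, ← Finset.sum_add_distrib]
      exact Finset.sum_congr rfl fun i _ => by simp only [hwdef]; ring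
    have h2 : ∑ i, γ i * ψ (w i) ≤ (1-s) * (∑ i, γ i * ψ (x i)) + s * ∑ i, γ i * ψ (z i) := by
      rw [Finset.mul_sum, Finset.mul_sum, ← Finset.sum_add_distrib]
      apply Finset.sum_le_sum
      intro i _
      have hcv := hψconv.2 (Set.mem_Ioi.mpr (hxpos i)) (Set.mem_Ioi.mpr (hzpos i))
        (by rw [hs1]; norm_num : (0:ℝ) ≤ 1 - s) hs0.le (by ring)
      simp only [smul_eq_mul] at hcv
      have hw' : ψ (w i) ≤ (1-s) * ψ (x i) + s * ψ (z i) := by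
        simp only [hwdef]; exact hcv
      nlinarith [hγpos i]
    have hq1 : ∑ i, ((1-s) * Real.log (x i)) = (1-s) * ∑ i, Real.log (x i) :=
      (Finset.mul_sum _ _ _).symm
    have hq2 : ∑ i, (s * Real.log (z i)) = s * ∑ i, Real.log (z i) :=
      (Finset.mul_sum _ _ _).symm
    have hq3 : ∑ i, (s * ((31/128) * (t * u i)^2)) = s * ((31/128) * ∑ i, (t * u i)^2) := by
      rw [Finset.mul_sum, Finset.mul_sum]
    have h3 : (1-s) * ∑ i, Real.log (x i) + s * ∑ i, Real.log (z i)
        + s * ((31/128) * ∑ i, (t * u i)^2) ≤ ∑ i, Real.log (w i) := by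
      have hsum := Finset.sum_le_sum (fun i (_ : i ∈ Finset.univ) => hgap i)
      rw [Finset.sum_add_distrib, Finset.sum_add_distrib, hq1, hq2, hq3] at hsum
      exact hsum
    have h4 := mul_le_mul_of_nonneg_left h3 hClogPos.le
    refine gap_lemma hs0 (hxmin w hwΩ) ?_
    nlinarith [h1, h2, h4]
  -- Step (c): upper bound by the loss/regularizer perturbation
  obtain ⟨bb, hbbdef⟩ : ∃ f : Fin d → ℝ,
      f = fun i => (L' i - L i) + (γ' i - γ i) * ψ' (x i) := ⟨_, rfl⟩
  have hstepc :
      ((∑ i, z i * L i) + (∑ i, γ i * ψ (z i)) - Clog * ∑ i, Real.log (z i))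
        - ((∑ i, x i * L i) + (∑ i, γ i * ψ (x i)) - Clog * ∑ i, Real.log (x i))
      ≤ -t * ∑ i, (bb i * x i) * u i := by
    have e1 : ∑ i, (L i - L' i) * (z i - x i)
        = ((∑ i, z i * L i) - ∑ i, x i * L i) - ((∑ i, z i * L' i) - ∑ i, x i * L' i) := by
      rw [← Finset.sum_sub_distrib, ← Finset.sum_sub_distrib, ← Finset.sum_sub_distrib]
      exact Finset.sum_congr rfl fun i _ => by ring
    have e2 : ∑ i, (γ i - γ' i) * (ψ (z i) - ψ (x i))
        = ((∑ i, γ i * ψ (z i)) - ∑ i, γ i * ψ (x i))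
          - ((∑ i, γ' i * ψ (z i)) - ∑ i, γ' i * ψ (x i)) := by
      rw [← Finset.sum_sub_distrib, ← Finset.sum_sub_distrib, ← Finset.sum_sub_distrib]
      exact Finset.sum_congr rfl fun i _ => by ring
    have e3 : ∑ i, (γ i - γ' i) * (ψ (z i) - ψ (x i))
        ≤ ∑ i, (γ i - γ' i) * (ψ' (x i) * (z i - x i)) := by
      apply Finset.sum_le_sum
      intro i _
      have htg := tangent (x i) (z i) (hxpos i) (hzpos i)
      have hnp : γ i - γ' i ≤ 0 := by linarith [hγle i]
      nlinarith [htg, hnp]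
    have e4 : ∑ i, ((L i - L' i) * (z i - x i) + (γ i - γ' i) * (ψ' (x i) * (z i - x i)))
        = -t * ∑ i, (bb i * x i) * u i := by
      rw [Finset.mul_sum]
      apply Finset.sum_congr rfl
      intro i _
      rw [hzxd i]
      simp only [hbbdef]
      ring
    have e5 : ∑ i, ((L i - L' i) * (z i - x i) + (γ i - γ' i) * (ψ' (x i) * (z i - x i)))
        = (∑ i, (L i - L' i) * (z i - x i)) + ∑ i, (γ i - γ' i) * (ψ' (x i) * (z i - x i)) :=
      Finset.sum_add_distrib
    linarith [hstepb, e1, e2, e3, e4, e5]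
  -- Cauchy–Schwarz and numerical conclusion
  obtain ⟨U2, hU2def⟩ : ∃ r : ℝ, r = ∑ i, (u i)^2 := ⟨_, rfl⟩
  obtain ⟨R, hRdef⟩ : ∃ r : ℝ, r = ∑ i, (bb i * x i) * u i := ⟨_, rfl⟩
  have hU2k : M^2 ≤ U2 := by
    have h1 : (u k)^2 ≤ U2 := by
      rw [hU2def]
      exact Finset.single_le_sum (fun i _ => sq_nonneg (u i)) (mem_univ k)
    have h2 : M^2 = (u k)^2 := by rw [hk']; exact sq_abs _
    linarith
  have hQ : (1:ℝ)/4 ≤ t^2 * U2 := by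
    have h1 : t^2 * M^2 ≤ t^2 * U2 := mul_le_mul_of_nonneg_left hU2k (sq_nonneg t)
    nlinarith [htM]
  have hT : ∑ i, (t * u i)^2 = t^2 * U2 := by
    rw [hU2def, Finset.mul_sum]
    exact Finset.sum_congr rfl fun i _ => by ring
  have hCS : R^2 ≤ (∑ i, (bb i * x i)^2) * U2 := by
    rw [hRdef, hU2def]
    exact Finset.sum_mul_sq_le_sq_mul_sq Finset.univ (fun i => bb i * x i) u
  have hb1 : 32 * ∑ i, (L' i - L i)^2 * (x i)^2 ≤ Clog :=
    le_trans (le_trans (le_max_left _ _) (le_max_right _ _)) hClogBig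
  have hb2 : 32 * ∑ i, (γ' i - γ i)^2 * (ψ' (x i))^2 * (x i)^2 ≤ Clog :=
    le_trans (le_trans (le_max_right _ _) (le_max_right _ _)) hClogBig
  have h9 : (9:ℝ) ≤ Clog := le_trans (le_max_left _ _) hClogBig
  have hB2 : ∑ i, (bb i * x i)^2 ≤ Clog/8 := by
    have hsplit : ∑ i, (bb i * x i)^2
        ≤ ∑ i, (2 * ((L' i - L i)^2 * (x i)^2)
            + 2 * ((γ' i - γ i)^2 * (ψ' (x i))^2 * (x i)^2)) := by
      apply Finset.sum_le_sum
      intro i _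
      simp only [hbbdef]
      nlinarith [sq_nonneg ((L' i - L i) * x i - (γ' i - γ i) * ψ' (x i) * x i)]
    rw [Finset.sum_add_distrib, ← Finset.mul_sum, ← Finset.mul_sum] at hsplit
    linarith
  have hU2nonneg : (0:ℝ) ≤ U2 := by
    rw [hU2def]; exact Finset.sum_nonneg fun i _ => sq_nonneg _
  have hmain : Clog * ((31/128) * (t^2 * U2)) ≤ -t * R := by
    rw [← hT, hRdef]
    exact le_trans hstepa hstepc
  have hQpos : (0:ℝ) < t^2 * U2 := lt_of_lt_of_le (by norm_num) hQ
  have hApos : (0:ℝ) < Clog * ((31/128) * (t^2 * U2)) := by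
    nlinarith [mul_pos hClogPos hQpos]
  have hsq : (Clog * ((31/128) * (t^2 * U2)))^2 ≤ t^2 * R^2 := by
    have h := mul_self_le_mul_self hApos.le hmain
    nlinarith [h]
  have hsq2 : t^2 * R^2 ≤ t^2 * ((Clog/8) * U2) := by
    have hR2 : R^2 ≤ (Clog/8) * U2 := by
      calc R^2 ≤ (∑ i, (bb i * x i)^2) * U2 := hCS
        _ ≤ (Clog/8) * U2 := mul_le_mul_of_nonneg_right hB2 hU2nonneg
    exact mul_le_mul_of_nonneg_left hR2 (sq_nonneg t)
  have hPineq : (9:ℝ)/4 ≤ Clog * (t^2 * U2) := by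
    have := mul_le_mul h9 hQ (by norm_num) (by linarith)
    linarith [this]
  have hkey : (31/128:ℝ)^2 * (Clog * (t^2 * U2))^2 ≤ (Clog * (t^2 * U2))/8 := by
    have e : (Clog * ((31/128) * (t^2 * U2)))^2 = (31/128:ℝ)^2 * (Clog * (t^2 * U2))^2 := by ring
    have e2 : t^2 * ((Clog/8) * U2) = (Clog * (t^2 * U2))/8 := by ring
    rw [← e, ← e2]
    exact le_trans hsq hsq2
  nlinarith [hkey, hPineq, sq_nonneg (Clog * (t^2 * U2) - 9/4)]
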